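/- Let H be a Hilbert space, d : Dom(d) ⊂ H → H a closed densely defined operator with d² = 0 (i.e. Im(d) ⊂ Ker(d) and d vanishes on Im(d) ∩ Dom(d)), and d* its adjoint. Then H decomposes orthogonally as H = (Ker(d) ∩ Ker(d*)) ⊕ closure(Im(d)) ⊕ closure(Im(d*)). -/

import Mathlib

open Submodule

theorem orth_closure {H : Type*} [NormedAddCommGroup H] [InnerProductSpace ℝ H]
    (K : Submodule ℝ H) : K.topologicalClosureᗮ = Kᗮ := by
  refine le_antisymm (Submodule.orthogonal_le K.le_topologicalClosure) ?_
  intro x hx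
  rw [Submodule.mem_orthogonal] at hx ⊢
  intro u hu
  have hcl : IsClosed {v : H | inner (𝕜 := ℝ) v x = 0} :=
    isClosed_eq (Continuous.inner continuous_id continuous_const) continuous_const
  have hK : closure (K : Set H) ⊆ {v | inner (𝕜 := ℝ) v x = 0} :=
    closure_minimal (fun v hv => hx v hv) hcl
  exact hK (by rw [← Submodule.topologicalClosure_coe]; exact hu)

theorem weak_hodge_decomposition
    {H : Type*} [NormedAddCommGroup H] [InnerProductSpace ℝ H] [CompleteSpace H]
    (d : H →ₗ.[ℝ] H)
    (hclosed : d.IsClosed)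
    (hdense : Dense (d.domain : Set H))
    (hd2 : ∀ x (hx : x ∈ d.domain), ∃ h2 : d ⟨x, hx⟩ ∈ d.domain,
      d ⟨d ⟨x, hx⟩, h2⟩ = 0) :
    letI Kerd : Submodule ℝ H := (LinearMap.ker d.toFun).map d.domain.subtype
    letI Kerdstar : Submodule ℝ H :=
      (LinearMap.ker d.adjoint.toFun).map d.adjoint.domain.subtype
    letI Harm : Submodule ℝ H := Kerd ⊓ Kerdstar
    letI Imd : Submodule ℝ H := (LinearMap.range d.toFun).topologicalClosure
    letI Imdstar : Submodule ℝ H := (LinearMap.range d.adjoint.toFun).topologicalClosure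
    Harm ≤ Imdᗮ ∧ Harm ≤ Imdstarᗮ ∧ Imd ≤ Imdstarᗮ ∧
      Harm ⊔ Imd ⊔ Imdstar = ⊤ := by
  set Kerd : Submodule ℝ H := (LinearMap.ker d.toFun).map d.domain.subtype with hKerd
  set Kerdstar : Submodule ℝ H :=
    (LinearMap.ker d.adjoint.toFun).map d.adjoint.domain.subtype with hKerdstar
  set Harm : Submodule ℝ H := Kerd ⊓ Kerdstar with hHarm
  set R : Submodule ℝ H := LinearMap.range d.toFun with hR
  set Rs : Submodule ℝ H := LinearMap.range d.adjoint.toFun with hRs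
  have hadj := d.adjoint_isFormalAdjoint hdense
  -- orthogonality of Ker d* and range d
  have fact1 : Kerdstar ≤ Rᗮ := by
    rintro x ⟨y, hy, rfl⟩
    rw [Submodule.mem_orthogonal]
    rintro u ⟨z, rfl⟩
    have hy' : d.adjoint y = 0 := hy
    have := hadj y z
    rw [hy'] at this
    simp only [inner_zero_left] at this
    rw [real_inner_comm]
    exact this.symm
  have fact2 : Kerd ≤ Rsᗮ := by
    rintro x ⟨y, hy, rfl⟩
    rw [Submodule.mem_orthogonal]
    rintro u ⟨z, rfl⟩
    have hy' : d y = 0 := hy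
    have := hadj z y
    rw [hy'] at this
    simp only [inner_zero_right] at this
    exact this
  have fact3 : R ≤ Rsᗮ := by
    rintro x ⟨z, rfl⟩
    rw [Submodule.mem_orthogonal]
    rintro u ⟨y, rfl⟩
    obtain ⟨h2, hzz⟩ := hd2 z z.2
    have := hadj y ⟨d ⟨(z : H), z.2⟩, h2⟩
    rw [hzz] at this
    simp only [inner_zero_right] at this
    exact this
  -- x ⊥ range d  implies  x ∈ ker d*
  have hker_star : ∀ x ∈ Rᗮ, ∃ hx : x ∈ d.adjoint.domain, d.adjoint ⟨x, hx⟩ = 0 := by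
    intro x hx
    rw [Submodule.mem_orthogonal] at hx
    have key : ∀ u : d.domain, inner (𝕜 := ℝ) (0 : H) (u : H) = inner (𝕜 := ℝ) x (d u) := by
      intro u
      rw [inner_zero_left, real_inner_comm]
      exact (hx (d u) ⟨u, rfl⟩).symm
    have hmem : x ∈ d.adjoint.domain :=
      LinearPMap.mem_adjoint_domain_of_exists x ⟨0, key⟩
    exact ⟨hmem, LinearPMap.adjoint_apply_eq hdense ⟨x, hmem⟩ key⟩
  -- x ⊥ range d*  implies  x ∈ ker d  (uses closedness of d)
  have hker : ∀ x ∈ Rsᗮ, ∃ hx : x ∈ d.domain, d ⟨x, hx⟩ = 0 := by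
    intro x hx
    rw [Submodule.mem_orthogonal] at hx
    set e := WithLp.linearEquiv 2 ℝ (H × H) with he
    set G : Submodule ℝ (WithLp 2 (H × H)) := d.graph.comap (e : WithLp 2 (H × H) →ₗ[ℝ] H × H)
      with hG
    have hGclosed : IsClosed (G : Set (WithLp 2 (H × H))) := by
      have : (G : Set (WithLp 2 (H × H))) =
          (WithLp.prodContinuousLinearEquiv 2 ℝ H H) ⁻¹' (d.graph : Set (H × H)) := rfl
      rw [this]
      exact hclosed.preimage (WithLp.prodContinuousLinearEquiv 2 ℝ H H).continuous
    haveI : CompleteSpace G := hGclosed.completeSpace_coe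
    have hGG : Gᗮᗮ = G := Submodule.orthogonal_orthogonal G
    have hx0 : (e.symm (x, 0)) ∈ G := by
      rw [← hGG, Submodule.mem_orthogonal]
      intro v hv
      rw [Submodule.mem_orthogonal] at hv
      have key : ∀ u : d.domain, inner (𝕜 := ℝ) (-(e v).1) (u : H)
          = inner (𝕜 := ℝ) (e v).2 (d u) := by
        intro u
        have hmemG : e.symm ((u : H), d u) ∈ G := by
          show e (e.symm _) ∈ d.graph
          rw [LinearEquiv.apply_symm_apply]
          exact d.mem_graph u
        have h0 : inner (𝕜 := ℝ) ((u : H)) ((e v).1)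
            + inner (𝕜 := ℝ) (d u) ((e v).2) = 0 := hv _ hmemG
        rw [inner_neg_left]
        linarith [real_inner_comm ((e v).1) ((u : H)), real_inner_comm ((e v).2) (d u), h0]
      have hv2 : (e v).2 ∈ d.adjoint.domain :=
        LinearPMap.mem_adjoint_domain_of_exists _ ⟨-(e v).1, key⟩
      have hval : d.adjoint ⟨(e v).2, hv2⟩ = -(e v).1 :=
        LinearPMap.adjoint_apply_eq hdense ⟨(e v).2, hv2⟩ key
      have hsum : inner (𝕜 := ℝ) v (e.symm (x, 0))
          = inner (𝕜 := ℝ) ((e v).1) x + inner (𝕜 := ℝ) ((e v).2) (0 : H) := rfl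
      rw [hsum, inner_zero_right, add_zero]
      have hrange : inner (𝕜 := ℝ) (-(e v).1) x = 0 := by
        rw [← hval]
        exact hx _ ⟨⟨(e v).2, hv2⟩, rfl⟩
      rw [inner_neg_left] at hrange
      linarith
    have hgraph : ((x, 0) : H × H) ∈ d.graph := by
      have h := hx0
      have : e (e.symm ((x, 0) : H × H)) ∈ d.graph := h
      rwa [LinearEquiv.apply_symm_apply] at this
    rw [LinearPMap.mem_graph_iff] at hgraph
    obtain ⟨y, hy1, hy2⟩ := hgraph
    have hy1' : (y : H) = x := hy1
    have hy2' : d y = 0 := hy2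
    refine ⟨hy1' ▸ y.2, ?_⟩
    have : (⟨x, hy1' ▸ y.2⟩ : d.domain) = y := Subtype.ext hy1'.symm
    rw [this, hy2']
  -- the four statements
  have c1 : Harm ≤ R.topologicalClosureᗮ := by
    rw [orth_closure]
    exact fun x hx => fact1 hx.2
  have c2 : Harm ≤ Rs.topologicalClosureᗮ := by
    rw [orth_closure]
    exact fun x hx => fact2 hx.1
  have c3 : R.topologicalClosure ≤ Rs.topologicalClosureᗮ := by
    rw [orth_closure]
    exact R.topologicalClosure_minimal fact3 Rs.isClosed_orthogonal
  refine ⟨c1, c2, c3, ?_⟩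
  have hHarmEq : Harm = R.topologicalClosureᗮ ⊓ Rs.topologicalClosureᗮ := by
    refine le_antisymm (le_inf c1 c2) ?_
    rintro x ⟨hx1, hx2⟩
    rw [orth_closure] at hx1 hx2
    obtain ⟨hxd, hxd0⟩ := hker x hx2
    obtain ⟨hxs, hxs0⟩ := hker_star x hx1
    exact ⟨⟨⟨x, hxd⟩, hxd0, rfl⟩, ⟨⟨x, hxs⟩, hxs0, rfl⟩⟩
  haveI : CompleteSpace (R.topologicalClosure : Submodule ℝ H) :=
    R.isClosed_topologicalClosure.completeSpace_coe
  haveI : CompleteSpace (Rs.topologicalClosure : Submodule ℝ H) :=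
    Rs.isClosed_topologicalClosure.completeSpace_coe
  have hsplit : R.topologicalClosure ⊔ (R.topologicalClosureᗮ ⊓ Rs.topologicalClosureᗮ)
      = Rs.topologicalClosureᗮ :=
    Submodule.sup_orthogonal_inf_of_hasOrthogonalProjection c3
  have htop : Rs.topologicalClosure ⊔ Rs.topologicalClosureᗮ = ⊤ :=
    Submodule.sup_orthogonal_of_hasOrthogonalProjection
  rw [hHarmEq,
    sup_comm (R.topologicalClosureᗮ ⊓ Rs.topologicalClosureᗮ) R.topologicalClosure, hsplit,
    sup_comm, htop]
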